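/- Let A₁ be a nonzero Banach space, A₂ a Banach space, Z a set, and Δ : Z → A₂* a map with ‖Δ(z)‖ ≤ 1 for all z ∈ Z, such that ‖g‖ = sup_{z ∈ Z} |Δ(z)(g)| for every g ∈ A₂. Let T : A₁ → A₂ be a linear isometry (into). Then the closed unit ball of A₁* equals the weak-* closed convex hull of the set {λ • T*(Δ(z)) : λ ∈ ℂ, |λ| = 1, z ∈ Z}, where T* is the dual (adjoint) map of T. -/

import Mathlib

set_option maxHeartbeats 1000000

open NormedSpace

lemma weakDual_functional_eval {E : Type*} [NormedAddCommGroup E] [NormedSpace ℂ E]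
    (F : WeakDual ℂ E →L[ℂ] ℂ) : ∃ x : E, ∀ m : WeakDual ℂ E, F m = m x := by
  classical
  haveI : Nonempty E := ⟨0⟩
  have hws : @WithSeminorms ℂ (WeakDual ℂ E) E _ _ (WeakDual.instModule' ℂ) (WeakDual.seminormFamily ℂ E) _ :=
    (topDualPairing ℂ E).weakBilin_withSeminorms
  set q : Seminorm ℂ (WeakDual ℂ E) := (normSeminorm ℂ ℂ).comp F.toLinearMap with hq
  have hqc : Continuous q := by
    have : ⇑q = fun m => ‖F m‖ := rfl
    rw [this]
    exact F.continuous.norm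
  obtain ⟨s, C, hC0, hC⟩ := Seminorm.bound_of_continuous hws q hqc
  set L : s → (WeakDual ℂ E →ₗ[ℂ] ℂ) := fun i => (topDualPairing ℂ E).flip (i : E) with hL
  have hker : ⨅ i : s, LinearMap.ker (L i) ≤ LinearMap.ker (F.toLinearMap) := by
    intro m hm
    simp only [Submodule.mem_iInf, LinearMap.mem_ker] at hm ⊢
    have hsup : (s.sup (WeakDual.seminormFamily ℂ E)) m = 0 := by
      refine le_antisymm (Seminorm.finset_sup_apply_le le_rfl ?_) (apply_nonneg _ _)
      intro i hi
      rw [WeakDual.seminormFamily_apply]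
      have h0 : topDualPairing ℂ E m i = 0 := hm ⟨i, hi⟩
      simp
      exact h0
    have h1 : ‖F m‖ ≤ 0 := by
      have h2 : q m ≤ (C • s.sup (WeakDual.seminormFamily ℂ E)) m := hC m
      rw [Seminorm.smul_apply, hsup, smul_zero] at h2
      exact h2
    simpa using le_antisymm h1 (norm_nonneg _)
  have hspan := mem_span_of_iInf_ker_le_ker (L := L) (K := F.toLinearMap) hker
  rw [Submodule.mem_span_range_iff_exists_fun] at hspan
  obtain ⟨c, hc⟩ := hspan
  refine ⟨∑ i : s, c i • (i : E), fun m => ?_⟩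
  have h2 : F m = ∑ i : s, c i * m i := by
    have h3 := congrArg (fun K : WeakDual ℂ E →ₗ[ℂ] ℂ => K m) hc
    rw [LinearMap.sum_apply] at h3
    exact h3.symm.trans (Finset.sum_congr rfl fun i _ => rfl)
  rw [h2, map_sum]
  simp [smul_eq_mul, map_smul]

theorem dualBall_eq_weakStar_closedConvexHull
    {A₁ A₂ : Type*} [NormedAddCommGroup A₁] [NormedSpace ℂ A₁] [CompleteSpace A₁] [Nontrivial A₁]
    [NormedAddCommGroup A₂] [NormedSpace ℂ A₂] [CompleteSpace A₂]
    {Z : Type*} (Δ : Z → (A₂ →L[ℂ] ℂ))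
    (hΔ1 : ∀ z : Z, ‖Δ z‖ ≤ 1)
    (hΔ2 : ∀ g : A₂, ‖g‖ = ⨆ z : Z, ‖Δ z g‖)
    (T : A₁ →L[ℂ] A₂) (hT : ∀ f : A₁, ‖T f‖ = ‖f‖) :
    (StrongDual.toWeakDual : (A₁ →L[ℂ] ℂ) → WeakDual ℂ A₁) '' Metric.closedBall 0 1 =
      closure (convexHull ℝ
        {m : WeakDual ℂ A₁ | ∃ lam : ℂ, ‖lam‖ = 1 ∧ ∃ z : Z,
          m = StrongDual.toWeakDual (lam • ((Δ z).comp T))}) := by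
  classical
  haveI hZ : Nonempty Z := by
    by_contra h
    rw [not_nonempty_iff] at h
    obtain ⟨f, hf⟩ := exists_ne (0 : A₁)
    apply hf
    have h1 : ‖T f‖ = 0 := by rw [hΔ2]; exact Real.iSup_of_isEmpty _
    rw [hT f] at h1
    exact norm_eq_zero.mp h1
  -- norm bound on generators
  have hnorm : ∀ (lam : ℂ), ‖lam‖ = 1 → ∀ z : Z, ‖lam • ((Δ z).comp T)‖ ≤ 1 := by
    intro lam hl z
    refine ContinuousLinearMap.opNorm_le_bound _ zero_le_one (fun f => ?_)
    have heval : (lam • ((Δ z).comp T)) f = lam • ((Δ z) (T f)) := rfl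
    rw [heval, norm_smul, hl, one_mul]
    calc ‖(Δ z) (T f)‖ ≤ ‖Δ z‖ * ‖T f‖ := (Δ z).le_opNorm _
      _ ≤ 1 * ‖T f‖ := mul_le_mul_of_nonneg_right (hΔ1 z) (norm_nonneg _)
      _ = 1 * ‖f‖ := by rw [hT f]
  -- the image of the ball equals a preimage
  have hBeq : ((StrongDual.toWeakDual : (A₁ →L[ℂ] ℂ) → WeakDual ℂ A₁) '' Metric.closedBall 0 1)
      = (WeakDual.toStrongDual : WeakDual ℂ A₁ → (A₁ →L[ℂ] ℂ)) ⁻¹' Metric.closedBall 0 1 := by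
    ext m
    constructor
    · rintro ⟨φ, hφ, rfl⟩
      exact hφ
    · intro hm
      exact ⟨WeakDual.toStrongDual m, hm, rfl⟩
  have hBclosed : IsClosed ((StrongDual.toWeakDual : (A₁ →L[ℂ] ℂ) → WeakDual ℂ A₁) ''
      Metric.closedBall 0 1) := by
    rw [hBeq]; exact WeakDual.isClosed_closedBall 0 1
  have hBconvex : Convex ℝ ((StrongDual.toWeakDual : (A₁ →L[ℂ] ℂ) → WeakDual ℂ A₁) ''
      Metric.closedBall 0 1) := by
    rw [hBeq]
    intro x hx y hy a b ha hb hab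
    simp only [Set.mem_preimage, Metric.mem_closedBall, dist_zero_right] at hx hy ⊢
    have heq : WeakDual.toStrongDual (a • x + b • y)
        = a • WeakDual.toStrongDual x + b • WeakDual.toStrongDual y := rfl
    rw [heq]
    calc ‖a • WeakDual.toStrongDual x + b • WeakDual.toStrongDual y‖
        ≤ ‖a • WeakDual.toStrongDual x‖ + ‖b • WeakDual.toStrongDual y‖ := norm_add_le _ _
      _ = |a| * ‖WeakDual.toStrongDual x‖ + |b| * ‖WeakDual.toStrongDual y‖ := by
          rw [norm_smul, norm_smul, Real.norm_eq_abs, Real.norm_eq_abs]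
      _ ≤ |a| * 1 + |b| * 1 := by
          gcongr
      _ = 1 := by rw [abs_of_nonneg ha, abs_of_nonneg hb, mul_one, mul_one, hab]
  refine Set.Subset.antisymm ?_ (closure_minimal (convexHull_min ?_ hBconvex) hBclosed)
  · -- hard direction
    intro ψ hψ
    obtain ⟨φ, hφ, rfl⟩ := hψ
    rw [Metric.mem_closedBall, dist_zero_right] at hφ
    by_contra hnot
    haveI : LocallyConvexSpace ℝ (WeakDual ℂ A₁) :=
      WeakBilin.locallyConvexSpace (B := topDualPairing ℂ A₁)
    haveI : IsScalarTower ℝ ℂ (WeakDual ℂ A₁) :=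
      (inferInstance : IsScalarTower ℝ ℂ (A₁ →L[ℂ] ℂ))
    have hKc : Convex ℝ (closure (convexHull ℝ
        {m : WeakDual ℂ A₁ | ∃ lam : ℂ, ‖lam‖ = 1 ∧ ∃ z : Z,
          m = StrongDual.toWeakDual (lam • ((Δ z).comp T))})) :=
      (convex_convexHull ℝ _).closure
    obtain ⟨F, u, hFK, hFψ⟩ := @RCLike.geometric_hahn_banach_closed_point ℂ _ _ _ _ _ _ _ _ _ _ _ (by assumption)
      hKc isClosed_closure hnot
    obtain ⟨f, hf⟩ := weakDual_functional_eval F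
    have key : ∀ z : Z, ‖Δ z (T f)‖ < u := by
      intro z
      set c : ℂ := Δ z (T f) with hc
      obtain ⟨lam, hlam, hlamc⟩ : ∃ lam : ℂ, ‖lam‖ = 1 ∧ lam * c = (‖c‖ : ℂ) := by
        rcases eq_or_ne c 0 with h0 | h0
        · exact ⟨1, norm_one, by simp [h0]⟩
        · refine ⟨(starRingEnd ℂ) c / ‖c‖, ?_, ?_⟩
          · rw [norm_div, RCLike.norm_conj]
            simp only [Complex.norm_real, Real.norm_eq_abs, abs_norm]
            exact div_self (norm_ne_zero_iff.mpr h0)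
          · have h0' : (‖c‖ : ℂ) ≠ 0 := by
              exact_mod_cast norm_ne_zero_iff.mpr h0
            calc (starRingEnd ℂ) c / (‖c‖ : ℂ) * c = c * (starRingEnd ℂ) c / ‖c‖ := by ring
              _ = (‖c‖ : ℂ) ^ 2 / ‖c‖ := by rw [Complex.mul_conj']
              _ = (‖c‖ : ℂ) := by rw [sq]; field_simp
      have hmem : StrongDual.toWeakDual (lam • ((Δ z).comp T)) ∈ closure (convexHull ℝ
          {m : WeakDual ℂ A₁ | ∃ lam : ℂ, ‖lam‖ = 1 ∧ ∃ z : Z,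
            m = StrongDual.toWeakDual (lam • ((Δ z).comp T))}) :=
        subset_closure (subset_convexHull ℝ _ ⟨lam, hlam, z, rfl⟩)
      have hlt := hFK _ hmem
      rw [hf] at hlt
      have happ : (StrongDual.toWeakDual (lam • ((Δ z).comp T)) : WeakDual ℂ A₁) f = lam * c := rfl
      rw [happ, hlamc] at hlt
      simpa using hlt
    have hfu : ‖f‖ ≤ u := by
      rw [← hT f, hΔ2]
      exact ciSup_le fun z => (key z).le
    have hre : RCLike.re (F (StrongDual.toWeakDual φ)) ≤ ‖f‖ := by
      rw [hf]
      have happ : (StrongDual.toWeakDual φ : WeakDual ℂ A₁) f = φ f := rfl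
      rw [happ]
      calc RCLike.re (φ f) ≤ ‖φ f‖ := RCLike.re_le_norm _
        _ ≤ ‖φ‖ * ‖f‖ := φ.le_opNorm f
        _ ≤ 1 * ‖f‖ := mul_le_mul_of_nonneg_right hφ (norm_nonneg _)
        _ = ‖f‖ := one_mul _
    linarith
  · -- generators are in the ball image
    rintro m ⟨lam, hlam, z, rfl⟩
    exact ⟨lam • ((Δ z).comp T), by
      rw [Metric.mem_closedBall, dist_zero_right]; exact hnorm lam hlam z, rfl⟩
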